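/- Let d ≥ 1 and p ≥ 1. There exists a constant C(d) > 0 such that for every sufficiently small δ > 0 and every u ∈ L^p(𝕋^d), there exists x₀ ∈ 𝕋^d with ∫_{𝕋^d} |u(x)|^p dx ≤ (1 + C(d)δ) ∫_{[-1/2+3δ, 1/2-3δ]^d} |u(x + x₀)|^p dx. -/

import Mathlib

open MeasureTheory

/-- The fundamental domain `[-1/2, 1/2]^d` of the torus `𝕋^d = (ℝ/ℤ)^d` inside `ℝ^d`. -/
def cube (d : ℕ) : Set (EuclideanSpace ℝ (Fin d)) :=
  {x | ∀ i, x i ∈ Set.Icc (-(1 : ℝ)/2) (1/2)}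

/-- The lattice point `m ∈ ℤ^d` viewed as a vector of `ℝ^d`. -/
noncomputable def zval (d : ℕ) (m : Fin d → ℤ) : EuclideanSpace ℝ (Fin d) :=
  (EuclideanSpace.equiv (Fin d) ℝ).symm fun i => (m i : ℝ)

/- ### Auxiliary lemmas -/

lemma stmt5_aux_meas_vbox (d : ℕ) (v : Fin d → ℝ) (s : Set ℝ) (hs : MeasurableSet s) :
    MeasurableSet {x : EuclideanSpace ℝ (Fin d) | ∀ i, x i + v i ∈ s} := by
  have h : {x : EuclideanSpace ℝ (Fin d) | ∀ i, x i + v i ∈ s} =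
      ⋂ i, (fun x : EuclideanSpace ℝ (Fin d) => x i + v i) ⁻¹' s := by
    ext x; simp
  rw [h]
  refine MeasurableSet.iInter fun i => ?_
  have hm0 : Measurable (fun x : EuclideanSpace ℝ (Fin d) => x i) := by fun_prop
  exact (hm0.add_const (v i)) hs

lemma stmt5_aux_meas_pbox (d : ℕ) (s : Set ℝ) (hs : MeasurableSet s) :
    MeasurableSet {x : EuclideanSpace ℝ (Fin d) | ∀ i, x i ∈ s} := by
  have h : {x : EuclideanSpace ℝ (Fin d) | ∀ i, x i ∈ s} =
      ⋂ i, (fun x : EuclideanSpace ℝ (Fin d) => x i) ⁻¹' s := by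
    ext x; simp
  rw [h]
  refine MeasurableSet.iInter fun i => ?_
  have hm : Measurable (fun x : EuclideanSpace ℝ (Fin d) => x i) := by fun_prop
  exact hm hs

lemma stmt5_aux_integrable_comp_add (d : ℕ) (f : EuclideanSpace ℝ (Fin d) → ℝ)
    (v : EuclideanSpace ℝ (Fin d)) :
    Integrable (fun x => f (x + v)) ↔ Integrable f :=
  (measurePreserving_add_right volume v).integrable_comp_emb
    (MeasurableEquiv.addRight v).measurableEmbedding

lemma stmt5_aux_hyperplane_null (d : ℕ) (i : Fin d) (c : ℝ) :
    volume {x : EuclideanSpace ℝ (Fin d) | x i = c} = 0 := by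
  have hmp := EuclideanSpace.volume_preserving_symm_measurableEquiv_toLp (ι := Fin d)
  have hms : MeasurableSet {f : Fin d → ℝ | f i = c} :=
    measurableSet_eq_fun (measurable_pi_apply i) measurable_const
  have h : {x : EuclideanSpace ℝ (Fin d) | x i = c} =
      (MeasurableEquiv.toLp 2 (Fin d → ℝ)).symm ⁻¹' {f : Fin d → ℝ | f i = c} := rfl
  rw [h, hmp.measure_preimage hms.nullMeasurableSet, volume_pi]
  exact Measure.pi_hyperplane (fun _ => (volume : Measure ℝ)) i c

lemma stmt5_aux_sum_prod (d N : ℕ) (F : Fin d → Fin N × Fin 2 → ℝ) :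
    ∑ k : Fin d → Fin N, ∑ m : Fin d → Fin 2, ∏ i, F i (k i, m i) =
      ∏ i, ∑ q : Fin N × Fin 2, F i q := by
  have h1 : ∑ k : Fin d → Fin N, ∑ m : Fin d → Fin 2, ∏ i, F i (k i, m i)
      = ∑ q : (Fin d → Fin N) × (Fin d → Fin 2), ∏ i, F i (q.1 i, q.2 i) :=
    (Fintype.sum_prod_type
      (f := fun q : (Fin d → Fin N) × (Fin d → Fin 2) => ∏ i, F i (q.1 i, q.2 i))).symm
  have h2 : ∑ q : (Fin d → Fin N) × (Fin d → Fin 2), ∏ i, F i (q.1 i, q.2 i)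
      = ∑ j : Fin d → Fin N × Fin 2, ∏ i, F i (j i) := by
    refine (Fintype.sum_equiv (Equiv.arrowProdEquivProdArrow (Fin d) (fun _ => Fin N) (fun _ => Fin 2)) _ _ ?_).symm
    intro j
    exact Finset.prod_congr rfl fun i _ => rfl
  have h3 : ∑ j : Fin d → Fin N × Fin 2, ∏ i, F i (j i)
      = ∏ i, ∑ q : Fin N × Fin 2, F i q := by
    rw [Finset.prod_univ_sum (fun _ => (Finset.univ : Finset (Fin N × Fin 2))) F,
      Fintype.piFinset_univ]
  rw [h1, h2, h3]

open scoped Classical in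
/-- Per-coordinate pigeonhole counting lemma. -/
lemma stmt5_aux_coord_count (N : ℕ) (hNpos : 0 < N) (δ t : ℝ) (hδ0 : 0 < δ) (hδ16 : δ ≤ 1/16)
    (hNR : 1/δ ≤ (N : ℝ)) (ht1 : -(1:ℝ)/2 ≤ t) (ht2 : t < 1/2) :
    (N : ℝ) * (1 - 6*δ) - 2 ≤
      ((Finset.univ.filter (fun q : Fin N × Fin 2 =>
        t + (((q.2 : ℕ) : ℝ) - ((q.1 : ℕ) : ℝ)/(N : ℝ)) ∈
          Set.Ico (-(1:ℝ)/2 + 3*δ) (1/2 - 3*δ))).card : ℝ) := by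
  have hNR0 : (0:ℝ) < N := by exact_mod_cast hNpos
  have hNZ : (0:ℤ) < (N:ℤ) := by exact_mod_cast hNpos
  set α : ℝ := (N:ℝ) * (t + 1/2 + 3*δ) with hα
  set β : ℝ := (N:ℝ) * (t + 3/2 - 3*δ) with hβ
  have hα0 : 0 < α := by
    apply mul_pos hNR0; nlinarith
  have hβ2N : β < 2 * N := by
    have : t + 3/2 - 3*δ < 2 := by nlinarith
    nlinarith
  set A : Finset ℤ := Finset.Ico (⌈α⌉ + 1) ⌈β⌉ with hA
  -- facts about elements of A
  have hmemA : ∀ k' ∈ A, α < (k' : ℝ) ∧ (k' : ℝ) < β := by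
    intro k' hk'
    rw [hA, Finset.mem_Ico] at hk'
    constructor
    · have h1 : α ≤ (⌈α⌉ : ℝ) := Int.le_ceil α
      have h2 : ((⌈α⌉ + 1 : ℤ) : ℝ) ≤ (k' : ℝ) := by exact_mod_cast hk'.1
      push_cast at h2; linarith
    · have h1 : ((⌈β⌉ : ℤ) : ℝ) < β + 1 := Int.ceil_lt_add_one β
      have h2 : (k' : ℝ) ≤ ((⌈β⌉ - 1 : ℤ) : ℝ) := by exact_mod_cast Int.le_sub_one_of_lt hk'.2
      push_cast at h2; linarith
  have hposA : ∀ k' ∈ A, 0 < k' ∧ k' < 2 * (N:ℤ) := by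
    intro k' hk'
    obtain ⟨h1, h2⟩ := hmemA k' hk'
    constructor
    · by_contra h; push_neg at h
      have : (k' : ℝ) ≤ 0 := by exact_mod_cast h
      linarith
    · by_contra h; push_neg at h
      have : (2 * (N:ℤ) : ℝ) ≤ (k' : ℝ) := by exact_mod_cast h
      push_cast at this; linarith
  -- division facts
  have hdivfacts : ∀ k' ∈ A, 0 ≤ k' % (N:ℤ) ∧ k' % (N:ℤ) < N ∧ 0 ≤ k' / (N:ℤ) ∧ k' / (N:ℤ) < 2 := by
    intro k' hk'
    obtain ⟨hp, h2N⟩ := hposA k' hk'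
    refine ⟨Int.emod_nonneg k' (by omega), Int.emod_lt_of_pos k' hNZ,
      Int.ediv_nonneg hp.le (by omega), ?_⟩
    rw [Int.ediv_lt_iff_lt_mul hNZ]
    omega
  -- the injection
  set φ : ℤ → Fin N × Fin 2 := fun k' =>
    (⟨(k' % (N:ℤ)).toNat % N, Nat.mod_lt _ hNpos⟩,
     ⟨(1 - k' / (N:ℤ)).toNat % 2, Nat.mod_lt _ (by norm_num)⟩) with hφ
  have hφval : ∀ k' ∈ A, (((φ k').1 : ℕ) : ℤ) = k' % (N:ℤ) ∧ (((φ k').2 : ℕ) : ℤ) = 1 - k' / (N:ℤ) := by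
    intro k' hk'
    obtain ⟨hm0, hmN, hd0, hd2⟩ := hdivfacts k' hk'
    constructor
    · show ((((k' % (N:ℤ)).toNat % N : ℕ) : ℤ)) = k' % (N:ℤ)
      have h1 : (k' % (N:ℤ)).toNat < N := by omega
      rw [Nat.mod_eq_of_lt h1]
      omega
    · show ((((1 - k' / (N:ℤ)).toNat % 2 : ℕ) : ℤ)) = 1 - k' / (N:ℤ)
      have h1 : (1 - k' / (N:ℤ)).toNat < 2 := by omega
      rw [Nat.mod_eq_of_lt h1]
      omega
  have hmaps : ∀ k' ∈ A, φ k' ∈ Finset.univ.filter (fun q : Fin N × Fin 2 =>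
        t + (((q.2 : ℕ) : ℝ) - ((q.1 : ℕ) : ℝ)/(N : ℝ)) ∈
          Set.Ico (-(1:ℝ)/2 + 3*δ) (1/2 - 3*δ)) := by
    intro k' hk'
    obtain ⟨hv1, hv2⟩ := hφval k' hk'
    obtain ⟨hαk, hkβ⟩ := hmemA k' hk'
    rw [Finset.mem_filter]
    refine ⟨Finset.mem_univ _, ?_⟩
    have e1 : (((φ k').1 : ℕ) : ℝ) = ((k' % (N:ℤ) : ℤ) : ℝ) := by
      rw [← hv1]; norm_cast
    have e2 : (((φ k').2 : ℕ) : ℝ) = ((1 - k' / (N:ℤ) : ℤ) : ℝ) := by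
      rw [← hv2]; norm_cast
    have hmod : ((k' % (N:ℤ) : ℤ) : ℝ) = (k' : ℝ) - (N:ℝ) * ((k' / (N:ℤ) : ℤ) : ℝ) := by
      have := Int.mul_ediv_add_emod k' (N:ℤ)
      have := congrArg (Int.cast : ℤ → ℝ) this
      push_cast at this
      linarith
    have hexpr : t + ((((φ k').2 : ℕ) : ℝ) - (((φ k').1 : ℕ) : ℝ)/(N : ℝ)) = t + 1 - (k':ℝ)/(N:ℝ) := by
      rw [e1, e2, hmod]
      push_cast
      field_simp
      ring
    rw [hexpr, Set.mem_Ico]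
    have hd1 : α / (N:ℝ) < (k':ℝ) / (N:ℝ) := by gcongr
    have hd2 : (k':ℝ) / (N:ℝ) < β / (N:ℝ) := by gcongr
    have hα' : α / (N:ℝ) = t + 1/2 + 3*δ := by
      rw [hα, mul_div_cancel_left₀ _ (ne_of_gt hNR0)]
    have hβ' : β / (N:ℝ) = t + 3/2 - 3*δ := by
      rw [hβ, mul_div_cancel_left₀ _ (ne_of_gt hNR0)]
    rw [hα'] at hd1; rw [hβ'] at hd2
    constructor <;> linarith
  have hinj : Set.InjOn φ A := by
    intro k1 hk1 k2 hk2 heq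
    obtain ⟨h11, h12⟩ := hφval k1 hk1
    obtain ⟨h21, h22⟩ := hφval k2 hk2
    have e1 : (((φ k1).1 : ℕ) : ℤ) = (((φ k2).1 : ℕ) : ℤ) := by rw [heq]
    have e2 : (((φ k1).2 : ℕ) : ℤ) = (((φ k2).2 : ℕ) : ℤ) := by rw [heq]
    rw [h11, h21] at e1
    rw [h12, h22] at e2
    have hmodEq : k1 % (N:ℤ) = k2 % (N:ℤ) := by omega
    have hdivEq : k1 / (N:ℤ) = k2 / (N:ℤ) := by omega
    calc k1 = (N:ℤ) * (k1 / (N:ℤ)) + k1 % (N:ℤ) := (Int.mul_ediv_add_emod k1 (N:ℤ)).symm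
      _ = (N:ℤ) * (k2 / (N:ℤ)) + k2 % (N:ℤ) := by rw [hmodEq, hdivEq]
      _ = k2 := Int.mul_ediv_add_emod k2 (N:ℤ)
  have hcard := Finset.card_le_card_of_injOn φ hmaps hinj
  have hcardA : (A.card : ℝ) = ((⌈β⌉ - (⌈α⌉ + 1)).toNat : ℝ) := by
    rw [hA, Int.card_Ico]
  have hge : (N:ℝ) * (1 - 6*δ) - 2 ≤ (A.card : ℝ) := by
    rw [hcardA]
    have h1 : ((⌈β⌉ - (⌈α⌉ + 1) : ℤ) : ℝ) ≤ ((⌈β⌉ - (⌈α⌉ + 1)).toNat : ℝ) := by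
      exact_mod_cast Int.self_le_toNat _
    have h2 : β ≤ (⌈β⌉ : ℝ) := Int.le_ceil β
    have h3 : ((⌈α⌉:ℤ) : ℝ) < α + 1 := Int.ceil_lt_add_one α
    have h4 : β - α = (N:ℝ) * (1 - 6*δ) := by rw [hα, hβ]; ring
    push_cast at h1 ⊢
    linarith
  calc (N:ℝ) * (1 - 6*δ) - 2 ≤ (A.card : ℝ) := hge
    _ ≤ _ := by exact_mod_cast hcard

set_option maxHeartbeats 2000000 in
/-- For `d ≥ 1` and `p ≥ 1` there is `C(d) > 0` such that for every sufficiently small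
`δ > 0` and every `u ∈ L^p(𝕋^d)` (a `ℤ^d`-periodic function on `ℝ^d`), there is a
translation `x₀` with
`∫_{𝕋^d} |u|^p ≤ (1 + C(d)δ) ∫_{[-1/2+3δ,1/2-3δ]^d} |u(x+x₀)|^p dx`. -/
theorem stmt5 (d : ℕ) (hd : 0 < d) (p : ℝ) (hp : 1 ≤ p) :
    ∃ C > (0 : ℝ), ∃ δ₀ > (0 : ℝ), ∀ δ : ℝ, 0 < δ → δ ≤ δ₀ →
      ∀ u : EuclideanSpace ℝ (Fin d) → ℂ,
        (∀ (x : EuclideanSpace ℝ (Fin d)) (m : Fin d → ℤ), u (x + zval d m) = u x) →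
        IntegrableOn (fun x => ‖u x‖ ^ p) (cube d) →
        ∃ x₀ : EuclideanSpace ℝ (Fin d),
          (∫ x in cube d, ‖u x‖ ^ p) ≤
            (1 + C * δ) *
              ∫ x in {x : EuclideanSpace ℝ (Fin d) |
                  ∀ i, x i ∈ Set.Icc (-(1 : ℝ)/2 + 3 * δ) (1/2 - 3 * δ)},
                ‖u (x + x₀)‖ ^ p := by
  classical
  have hdR : (1:ℝ) ≤ (d:ℝ) := by exact_mod_cast hd
  refine ⟨16 * (d:ℝ), by nlinarith, 1/(16 * (d:ℝ)), by positivity, ?_⟩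
  intro δ hδ0 hδle u hu hInt
  have hδ16 : δ ≤ 1/16 := by
    have h1 : 1/(16*(d:ℝ)) ≤ 1/16 := by
      apply one_div_le_one_div_of_le (by norm_num)
      nlinarith
    linarith
  set g : EuclideanSpace ℝ (Fin d) → ℝ := fun x => ‖u x‖ ^ p with hgdef
  have hg0 : ∀ x, 0 ≤ g x := fun x => Real.rpow_nonneg (norm_nonneg _) p
  have hper : ∀ (x : EuclideanSpace ℝ (Fin d)) (c : Fin d → ℤ), g (x + zval d c) = g x := by
    intro x c; simp only [hgdef, hu x c]
  set N : ℕ := ⌈1/δ⌉₊ with hN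
  have hNpos : 0 < N := Nat.ceil_pos.mpr (by positivity)
  have hNR : 1/δ ≤ (N:ℝ) := Nat.le_ceil _
  have hNR0 : (0:ℝ) < (N:ℝ) := by exact_mod_cast hNpos
  have hNδ : 1 ≤ (N:ℝ) * δ := by
    have := (div_le_iff₀ hδ0).mp hNR
    linarith
  have h2N : 2/(N:ℝ) ≤ 2*δ := by
    rw [div_le_iff₀ hNR0]
    nlinarith
  have h16N : (16:ℝ) ≤ (N:ℝ) := by
    have h1 : (16:ℝ) ≤ 1/δ := by
      rw [le_div_iff₀ hδ0]; linarith
    linarith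
  -- shift vectors
  set vk : (Fin d → Fin N) → EuclideanSpace ℝ (Fin d) :=
    fun k => (EuclideanSpace.equiv (Fin d) ℝ).symm (fun i => ((k i : ℕ) : ℝ)/(N:ℝ)) with hvk
  -- sets
  set SIcc : Set (EuclideanSpace ℝ (Fin d)) :=
    {x | ∀ i, x i ∈ Set.Icc (-(1 : ℝ)/2 + 3 * δ) (1/2 - 3 * δ)} with hSIccdef
  set Q1 : Set (EuclideanSpace ℝ (Fin d)) :=
    {x | ∀ i, x i ∈ Set.Ico (-(1:ℝ)/2) (1/2)} with hQ1def
  set B : (Fin d → Fin N) → (Fin d → Fin 2) → Set (EuclideanSpace ℝ (Fin d)) :=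
    fun k m => {x | ∀ i, x i + (((m i : ℕ) : ℝ) - ((k i : ℕ) : ℝ)/(N:ℝ)) ∈
      Set.Ico (-(1:ℝ)/2 + 3*δ) (1/2 - 3*δ)} with hBdef
  have hmQ1 : MeasurableSet Q1 := stmt5_aux_meas_pbox d _ measurableSet_Ico
  have hmSIcc : MeasurableSet SIcc := stmt5_aux_meas_pbox d _ measurableSet_Icc
  have hmcube : MeasurableSet (cube d) := stmt5_aux_meas_pbox d _ measurableSet_Icc
  have hmB : ∀ k m, MeasurableSet (B k m) := fun k m => stmt5_aux_meas_vbox d _ _ measurableSet_Ico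
  -- integrability on lattice translates and big box
  have hICc : ∀ c : Fin d → ℤ, IntegrableOn g
      {x : EuclideanSpace ℝ (Fin d) | ∀ i, x i + (-(c i : ℝ)) ∈ Set.Icc (-(1:ℝ)/2) (1/2)} := by
    intro c
    set Cc := {x : EuclideanSpace ℝ (Fin d) | ∀ i, x i + (-(c i : ℝ)) ∈ Set.Icc (-(1:ℝ)/2) (1/2)}
      with hCcdef
    have hmCc : MeasurableSet Cc := stmt5_aux_meas_vbox d _ _ measurableSet_Icc
    suffices hkey : Integrable (Cc.indicator g) volume by
      exact (integrable_indicator_iff hmCc).mp hkey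
    rw [← stmt5_aux_integrable_comp_add d _ (zval d c)]
    have heq : (fun x => Cc.indicator g (x + zval d c)) = (cube d).indicator g := by
      funext x
      have hiff : x + zval d c ∈ Cc ↔ x ∈ cube d := by
        constructor
        · intro h i
          have h2 := h i
          have e : (x + zval d c) i + (-(c i : ℝ)) = x i := by
            show x i + (c i : ℝ) + (-(c i : ℝ)) = x i
            ring
          rwa [e] at h2
        · intro h i
          have e : (x + zval d c) i + (-(c i : ℝ)) = x i := by
            show x i + (c i : ℝ) + (-(c i : ℝ)) = x i
            ring
          rw [e]; exact h i
      by_cases hx : x ∈ cube d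
      · rw [Set.indicator_of_mem (hiff.mpr hx), Set.indicator_of_mem hx]
        exact hper x c
      · rw [Set.indicator_of_notMem (fun hc => hx (hiff.mp hc)),
          Set.indicator_of_notMem hx]
    rw [heq, integrable_indicator_iff hmcube]
    exact hInt
  have hIbig : IntegrableOn g {x : EuclideanSpace ℝ (Fin d) | ∀ i, x i ∈ Set.Icc (-(1:ℝ)/2) (3/2)} := by
    set bigbox := {x : EuclideanSpace ℝ (Fin d) | ∀ i, x i ∈ Set.Icc (-(1:ℝ)/2) (3/2)} with hbigdef
    have hcover : bigbox ⊆ ⋃ c ∈ Fintype.piFinset (fun _ : Fin d => ({0,1} : Finset ℤ)),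
        {x : EuclideanSpace ℝ (Fin d) | ∀ i, x i + (-(c i : ℝ)) ∈ Set.Icc (-(1:ℝ)/2) (1/2)} := by
      intro x hx
      refine Set.mem_iUnion.mpr ⟨fun i => if x i ≤ 1/2 then (0:ℤ) else 1, Set.mem_iUnion.mpr ⟨?_, ?_⟩⟩
      · rw [Fintype.mem_piFinset]
        intro i
        by_cases h : x i ≤ 1/2 <;> simp [h] <;> exact le_or_gt _ _
      · intro i
        have hxi := hx i
        rw [Set.mem_Icc] at hxi
        show x i + -(((if x i ≤ 1/2 then (0:ℤ) else 1) : ℤ) : ℝ) ∈ Set.Icc (-(1:ℝ)/2) (1/2)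
        by_cases h : x i ≤ 1/2
        · rw [if_pos h]
          push_cast
          rw [Set.mem_Icc]
          constructor <;> linarith [hxi.1]
        · rw [if_neg h]
          push_cast
          push_neg at h
          rw [Set.mem_Icc]
          constructor <;> linarith [hxi.2]
    exact (integrableOn_finset_iUnion.mpr (fun c _ => hICc c)).mono_set hcover
  have hQ1sub : Q1 ⊆ cube d := by
    intro x hx i
    exact Set.Ico_subset_Icc_self (hx i)
  have hIQ1 : IntegrableOn g Q1 := hInt.mono_set hQ1sub
  -- shifted integrability
  have hIshift : ∀ k, Integrable (SIcc.indicator (fun x => g (x + vk k))) := by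
    intro k
    set USet := {x : EuclideanSpace ℝ (Fin d) | ∀ i, x i + (-(((k i : ℕ):ℝ)/(N:ℝ))) ∈
      Set.Icc (-(1:ℝ)/2 + 3*δ) (1/2 - 3*δ)} with hUdef
    have hmU : MeasurableSet USet := stmt5_aux_meas_vbox d _ _ measurableSet_Icc
    have hUsub : USet ⊆ {x : EuclideanSpace ℝ (Fin d) | ∀ i, x i ∈ Set.Icc (-(1:ℝ)/2) (3/2)} := by
      intro x hx i
      have h1 := hx i
      rw [Set.mem_Icc] at h1 ⊢
      have hk1 : (0:ℝ) ≤ ((k i : ℕ) : ℝ)/(N:ℝ) := by positivity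
      have hk2 : ((k i : ℕ) : ℝ)/(N:ℝ) ≤ 1 := by
        rw [div_le_one hNR0]
        exact_mod_cast (k i).isLt.le
      constructor <;> linarith [h1.1, h1.2]
    have hIU : IntegrableOn g USet := hIbig.mono_set hUsub
    have heq : SIcc.indicator (fun x => g (x + vk k)) = fun x => USet.indicator g (x + vk k) := by
      funext x
      have hiff : x + vk k ∈ USet ↔ x ∈ SIcc := by
        constructor
        · intro h i
          have h2 := h i
          have e : (x + vk k) i + (-(((k i : ℕ):ℝ)/(N:ℝ))) = x i := by
            show x i + ((k i : ℕ):ℝ)/(N:ℝ) + (-(((k i : ℕ):ℝ)/(N:ℝ))) = x i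
            ring
          rwa [e] at h2
        · intro h i
          have e : (x + vk k) i + (-(((k i : ℕ):ℝ)/(N:ℝ))) = x i := by
            show x i + ((k i : ℕ):ℝ)/(N:ℝ) + (-(((k i : ℕ):ℝ)/(N:ℝ))) = x i
            ring
          rw [e]; exact h i
      by_cases hx : x ∈ SIcc
      · rw [Set.indicator_of_mem hx, Set.indicator_of_mem (hiff.mpr hx)]
      · rw [Set.indicator_of_notMem hx, Set.indicator_of_notMem (fun hc => hx (hiff.mp hc))]
    rw [heq, stmt5_aux_integrable_comp_add d (USet.indicator g) (vk k),
      integrable_indicator_iff hmU]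
    exact hIU
  -- equality of cube-integral and Q1-integral
  have hLQ : ∫ x in cube d, g x = ∫ x in Q1, g x := by
    apply setIntegral_congr_set
    rw [ae_eq_set]
    constructor
    · refine measure_mono_null ?_
        (measure_iUnion_null fun i => stmt5_aux_hyperplane_null d i (1/2))
      intro x hx
      obtain ⟨hx1, hx2⟩ := hx
      rw [hQ1def, Set.mem_setOf_eq] at hx2
      push_neg at hx2
      obtain ⟨i, hi⟩ := hx2
      rw [Set.mem_Ico] at hi
      push_neg at hi
      have h1 := hx1 i
      rw [Set.mem_Icc] at h1
      refine Set.mem_iUnion.mpr ⟨i, ?_⟩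
      show x i = 1/2
      by_cases hc : -(1:ℝ)/2 ≤ x i
      · linarith [hi hc, h1.2]
      · exact absurd h1.1 hc
    · rw [Set.diff_eq_empty.mpr hQ1sub]
      exact measure_empty
  set Lq : ℝ := ∫ x in Q1, g x with hLqdef
  have hLq0 : 0 ≤ Lq := setIntegral_nonneg hmQ1 fun x _ => hg0 x
  set c1 : ℝ := (N:ℝ) * (1 - 6*δ) - 2 with hc1def
  have hc1nn : 0 ≤ c1 := by
    rw [hc1def]; nlinarith
  have hc1N : 1 - 8*δ ≤ c1/(N:ℝ) := by
    rw [hc1def]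
    rw [le_div_iff₀ hNR0]
    nlinarith
  -- pointwise counting bound
  have hcount : ∀ x ∈ Q1, c1^d ≤
      ∑ k : Fin d → Fin N, ∑ m : Fin d → Fin 2, (B k m).indicator (fun _ => (1:ℝ)) x := by
    intro x hx
    set F : Fin d → Fin N × Fin 2 → ℝ := fun i q =>
      if x i + (((q.2 : ℕ) : ℝ) - ((q.1 : ℕ) : ℝ)/(N:ℝ)) ∈
        Set.Ico (-(1:ℝ)/2 + 3*δ) (1/2 - 3*δ) then (1:ℝ) else 0 with hF
    have hprod : ∀ (k : Fin d → Fin N) (m : Fin d → Fin 2),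
        (B k m).indicator (fun _ => (1:ℝ)) x = ∏ i, F i (k i, m i) := by
      intro k m
      by_cases h : x ∈ B k m
      · rw [Set.indicator_of_mem h]
        exact (Finset.prod_eq_one fun i _ => if_pos (h i)).symm
      · rw [Set.indicator_of_notMem h]
        obtain ⟨i, hi⟩ := not_forall.mp h
        refine (Finset.prod_eq_zero (Finset.mem_univ i) ?_).symm
        show F i (k i, m i) = 0
        rw [hF]
        exact if_neg hi
    have hre : ∑ k : Fin d → Fin N, ∑ m : Fin d → Fin 2, ∏ i, F i (k i, m i) =
        ∏ i, ∑ q : Fin N × Fin 2, F i q := stmt5_aux_sum_prod d N F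
    simp only [hprod]
    rw [hre]
    have hstep : ∀ i : Fin d, c1 ≤ ∑ q : Fin N × Fin 2, F i q := by
      intro i
      rw [hF]
      rw [Finset.sum_boole]
      have hxi := hx i
      rw [Set.mem_Ico] at hxi
      exact stmt5_aux_coord_count N hNpos δ (x i) hδ0 hδ16 hNR hxi.1 hxi.2
    calc c1^d = ∏ _i : Fin d, c1 := by
          rw [Finset.prod_const, Finset.card_univ, Fintype.card_fin]
      _ ≤ _ := Finset.prod_le_prod (fun i _ => hc1nn) (fun i _ => hstep i)
  have hpoint : ∀ x ∈ Q1, c1^d * g x ≤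
      ∑ k : Fin d → Fin N, ∑ m : Fin d → Fin 2, (B k m).indicator g x := by
    intro x hx
    have he : ∑ k : Fin d → Fin N, ∑ m : Fin d → Fin 2, (B k m).indicator g x =
        (∑ k : Fin d → Fin N, ∑ m : Fin d → Fin 2, (B k m).indicator (fun _ => (1:ℝ)) x) * g x := by
      rw [Finset.sum_mul]
      apply Finset.sum_congr rfl
      intro k _
      rw [Finset.sum_mul]
      apply Finset.sum_congr rfl
      intro m _
      by_cases h : x ∈ B k m <;> simp [h]
    rw [he]
    exact mul_le_mul_of_nonneg_right (hcount x hx) (hg0 x)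
  -- step 1 : integrate the pointwise bound
  have hintB : ∀ (k : Fin d → Fin N) (m : Fin d → Fin 2),
      Integrable ((B k m).indicator g) (volume.restrict Q1) :=
    fun k m => hIQ1.indicator (hmB k m)
  have hstep1 : c1^d * Lq ≤ ∑ k : Fin d → Fin N, ∑ m : Fin d → Fin 2,
      ∫ x in Q1, (B k m).indicator g x := by
    have h1 : c1^d * Lq = ∫ x in Q1, c1^d * g x := by
      rw [hLqdef, ← integral_const_mul]
    rw [h1]
    have h2 : ∫ x in Q1, c1^d * g x ≤ ∫ x in Q1,
        (∑ k : Fin d → Fin N, ∑ m : Fin d → Fin 2, (B k m).indicator g x) := by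
      apply setIntegral_mono_on (hIQ1.const_mul _) ?_ hmQ1 hpoint
      exact integrable_finset_sum _ (fun k _ => integrable_finset_sum _ (fun m _ => hintB k m))
    have h3 : ∫ x in Q1, (∑ k : Fin d → Fin N, ∑ m : Fin d → Fin 2, (B k m).indicator g x) =
        ∑ k : Fin d → Fin N, ∑ m : Fin d → Fin 2, ∫ x in Q1, (B k m).indicator g x := by
      rw [integral_finset_sum _ (fun k _ => integrable_finset_sum _ (fun m _ => hintB k m))]
      exact Finset.sum_congr rfl fun k _ => integral_finset_sum _ (fun m _ => hintB k m)
    rw [h3] at h2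
    exact h2
  -- step 2 : per-k folding
  have hstep2 : ∀ k : Fin d → Fin N, ∑ m : Fin d → Fin 2, ∫ x in Q1, (B k m).indicator g x ≤
      ∫ x in SIcc, g (x + vk k) := by
    intro k
    set T : (Fin d → Fin 2) → Set (EuclideanSpace ℝ (Fin d)) := fun m =>
      {x | (∀ i, x i ∈ Set.Ico (-(1 : ℝ)/2 + 3 * δ) (1/2 - 3 * δ)) ∧
        (∀ i, x i + (((k i : ℕ):ℝ)/(N:ℝ) - ((m i : ℕ):ℝ)) ∈ Set.Ico (-(1:ℝ)/2) (1/2))} with hTdef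
    have hmT : ∀ m, MeasurableSet (T m) := by
      intro m
      have : T m = {x : EuclideanSpace ℝ (Fin d) |
          ∀ i, x i ∈ Set.Ico (-(1 : ℝ)/2 + 3 * δ) (1/2 - 3 * δ)} ∩
          {x : EuclideanSpace ℝ (Fin d) |
          ∀ i, x i + (((k i : ℕ):ℝ)/(N:ℝ) - ((m i : ℕ):ℝ)) ∈ Set.Ico (-(1:ℝ)/2) (1/2)} := rfl
      rw [this]
      exact (stmt5_aux_meas_pbox d _ measurableSet_Ico).inter
        (stmt5_aux_meas_vbox d _ _ measurableSet_Ico)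
    have hTsub : ∀ m, T m ⊆ SIcc := fun m x hx i => Set.Ico_subset_Icc_self (hx.1 i)
    set f : EuclideanSpace ℝ (Fin d) → ℝ := fun y => g (y + vk k) with hfdef
    have hintT : ∀ m, Integrable ((T m).indicator f) := by
      intro m
      have he : (T m).indicator f = (T m).indicator (SIcc.indicator f) := by
        rw [Set.indicator_indicator, Set.inter_eq_left.mpr (hTsub m)]
      rw [he]
      exact (hIshift k).indicator (hmT m)
    have heq : ∀ m : Fin d → Fin 2, ∫ x in Q1, (B k m).indicator g x =
        ∫ x, (T m).indicator f x := by
      intro m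
      set w : EuclideanSpace ℝ (Fin d) :=
        (EuclideanSpace.equiv (Fin d) ℝ).symm
          (fun i => ((k i : ℕ):ℝ)/(N:ℝ) - ((m i : ℕ):ℝ)) with hwdef
      rw [← integral_indicator hmQ1, Set.indicator_indicator]
      rw [← integral_add_right_eq_self (fun x => (Q1 ∩ B k m).indicator g x) w]
      congr 1
      funext x
      have hiff : x + w ∈ Q1 ∩ B k m ↔ x ∈ T m := by
        constructor
        · rintro ⟨h1, h2⟩
          constructor
          · intro i
            have h3 := h2 i
            have e : (x + w) i + (((m i : ℕ):ℝ) - ((k i : ℕ):ℝ)/(N:ℝ)) = x i := by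
              show x i + (((k i : ℕ):ℝ)/(N:ℝ) - ((m i : ℕ):ℝ)) +
                (((m i : ℕ):ℝ) - ((k i : ℕ):ℝ)/(N:ℝ)) = x i
              ring
            rw [e] at h3
            exact h3
          · intro i
            exact h1 i
        · rintro ⟨h1, h2⟩
          constructor
          · intro i
            exact h2 i
          · intro i
            have h3 := h1 i
            have e : (x + w) i + (((m i : ℕ):ℝ) - ((k i : ℕ):ℝ)/(N:ℝ)) = x i := by
              show x i + (((k i : ℕ):ℝ)/(N:ℝ) - ((m i : ℕ):ℝ)) +
                (((m i : ℕ):ℝ) - ((k i : ℕ):ℝ)/(N:ℝ)) = x i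
              ring
            show (x + w) i + (((m i : ℕ):ℝ) - ((k i : ℕ):ℝ)/(N:ℝ)) ∈
              Set.Ico (-(1:ℝ)/2 + 3*δ) (1/2 - 3*δ)
            rw [e]
            exact h3
      by_cases hx : x ∈ T m
      · rw [Set.indicator_of_mem (hiff.mpr hx), Set.indicator_of_mem hx]
        have hxw : x + w = (x + vk k) + zval d (fun i => -((m i : ℕ) : ℤ)) := by
          apply PiLp.ext
          intro i
          show x i + (((k i : ℕ):ℝ)/(N:ℝ) - ((m i : ℕ):ℝ)) =
            x i + ((k i : ℕ):ℝ)/(N:ℝ) + ((-((m i : ℕ) : ℤ) : ℤ) : ℝ)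
          push_cast
          ring
        rw [hxw, hper]
      · rw [Set.indicator_of_notMem (fun hc => hx (hiff.mp hc)), Set.indicator_of_notMem hx]
    -- unique m
    have huniq : ∀ (x : EuclideanSpace ℝ (Fin d)) (m m' : Fin d → Fin 2),
        x ∈ T m → x ∈ T m' → m = m' := by
      intro x m m' hm hm'
      funext i
      have h1 := hm.2 i
      have h2 := hm'.2 i
      rw [Set.mem_Ico] at h1 h2
      have hlt : ((m i : ℕ) : ℝ) < ((m' i : ℕ) : ℝ) + 1 := by linarith [h1.1, h1.2, h2.1, h2.2]
      have hgt : ((m' i : ℕ) : ℝ) < ((m i : ℕ) : ℝ) + 1 := by linarith [h1.1, h1.2, h2.1, h2.2]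
      have hn1 : (m i : ℕ) < (m' i : ℕ) + 1 := by exact_mod_cast hlt
      have hn2 : (m' i : ℕ) < (m i : ℕ) + 1 := by exact_mod_cast hgt
      exact Fin.ext (by omega)
    have hptw : ∀ x, ∑ m : Fin d → Fin 2, (T m).indicator f x ≤ SIcc.indicator f x := by
      intro x
      by_cases hxS : x ∈ SIcc
      · by_cases hex : ∃ m, x ∈ T m
        · obtain ⟨m₀, hm₀⟩ := hex
          rw [Finset.sum_eq_single m₀
            (fun m _ hne => Set.indicator_of_notMem (fun hm => hne (huniq x m m₀ hm hm₀)) f)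
            (fun h => absurd (Finset.mem_univ _) h)]
          rw [Set.indicator_of_mem hm₀, Set.indicator_of_mem hxS]
        · push_neg at hex
          rw [Finset.sum_eq_zero (fun m _ => Set.indicator_of_notMem (hex m) f)]
          rw [Set.indicator_of_mem hxS]
          exact hg0 _
      · rw [Set.indicator_of_notMem hxS]
        rw [Finset.sum_eq_zero (fun m _ => Set.indicator_of_notMem (fun hc => hxS (hTsub m hc)) f)]
    calc ∑ m : Fin d → Fin 2, ∫ x in Q1, (B k m).indicator g x
        = ∑ m : Fin d → Fin 2, ∫ x, (T m).indicator f x := Finset.sum_congr rfl fun m _ => heq m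
      _ = ∫ x, ∑ m : Fin d → Fin 2, (T m).indicator f x :=
          (integral_finset_sum _ (fun m _ => hintT m)).symm
      _ ≤ ∫ x, SIcc.indicator f x := by
          apply integral_mono (integrable_finset_sum _ (fun m _ => hintT m)) (hIshift k) hptw
      _ = ∫ x in SIcc, f x := integral_indicator hmSIcc
  -- combine
  set I : (Fin d → Fin N) → ℝ := fun k => ∫ x in SIcc, g (x + vk k) with hIdef
  have hkey : c1^d * Lq ≤ ∑ k : Fin d → Fin N, I k :=
    le_trans hstep1 (Finset.sum_le_sum fun k _ => hstep2 k)
  have hNe : Nonempty (Fin d → Fin N) := ⟨fun _ => ⟨0, hNpos⟩⟩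
  have hpig : ∃ k : Fin d → Fin N, c1^d * Lq ≤ (N:ℝ)^d * I k := by
    by_contra hcon
    push_neg at hcon
    have h1 : ∑ k : Fin d → Fin N, (N:ℝ)^d * I k <
        ∑ _k : Fin d → Fin N, c1^d * Lq :=
      Finset.sum_lt_sum_of_nonempty Finset.univ_nonempty (fun k _ => hcon k)
    have h2 : ∑ _k : Fin d → Fin N, c1^d * Lq = (N:ℝ)^d * (c1^d * Lq) := by
      rw [Finset.sum_const, Finset.card_univ, Fintype.card_fun, Fintype.card_fin,
        Fintype.card_fin, nsmul_eq_mul]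
      push_cast
      ring
    have h3 : ∑ k : Fin d → Fin N, (N:ℝ)^d * I k = (N:ℝ)^d * ∑ k : Fin d → Fin N, I k := by
      rw [Finset.mul_sum]
    have hNd : (0:ℝ) < (N:ℝ)^d := by positivity
    rw [h3, h2] at h1
    have h4 : ∑ k : Fin d → Fin N, I k < c1^d * Lq := by
      exact lt_of_mul_lt_mul_left h1 hNd.le
    linarith
  obtain ⟨k, hk⟩ := hpig
  refine ⟨vk k, ?_⟩
  have hIk0 : 0 ≤ I k := setIntegral_nonneg hmSIcc fun x _ => hg0 _
  -- final arithmetic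
  have hrfrac : c1^d / (N:ℝ)^d = (c1/(N:ℝ))^d := by
    rw [div_pow]
  have hRLq : (c1/(N:ℝ))^d * Lq ≤ I k := by
    rw [← hrfrac, div_mul_eq_mul_div, div_le_iff₀ (by positivity)]
    linarith [hk]
  have h8δ : (0:ℝ) ≤ 1 - 8*δ := by linarith
  have hpow : (1 - 8*δ)^d ≤ (c1/(N:ℝ))^d := pow_le_pow_left₀ h8δ hc1N d
  have hBern : 1 - 8*(d:ℝ)*δ ≤ (1 - 8*δ)^d := by
    have := one_add_mul_le_pow (a := -(8*δ)) (by linarith) d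
    calc 1 - 8*(d:ℝ)*δ = 1 + (d:ℝ) * (-(8*δ)) := by ring
      _ ≤ (1 + -(8*δ))^d := this
      _ = (1 - 8*δ)^d := by ring_nf
  have hδd : 16*(d:ℝ)*δ ≤ 1 := by
    have hpos : (0:ℝ) < 16*(d:ℝ) := by nlinarith
    rw [le_div_iff₀ hpos] at hδle
    nlinarith
  have hfinal : 1 ≤ (1 + 16*(d:ℝ)*δ) * (c1/(N:ℝ))^d := by
    have h1 : 1 ≤ (1 + 16*(d:ℝ)*δ) * (1 - 8*(d:ℝ)*δ) := by
      nlinarith [mul_nonneg (mul_nonneg (by linarith : (0:ℝ) ≤ (d:ℝ)) hδ0.le)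
        (by linarith : (0:ℝ) ≤ 1 - 16*(d:ℝ)*δ)]
    have h2 : (1 - 8*(d:ℝ)*δ) ≤ (c1/(N:ℝ))^d := le_trans hBern hpow
    nlinarith
  have hgoal : Lq ≤ (1 + 16*(d:ℝ)*δ) * I k := by
    have hC0 : (0:ℝ) ≤ 1 + 16*(d:ℝ)*δ := by nlinarith
    calc Lq = 1 * Lq := (one_mul Lq).symm
      _ ≤ ((1 + 16*(d:ℝ)*δ) * (c1/(N:ℝ))^d) * Lq := by
          exact mul_le_mul_of_nonneg_right hfinal hLq0
      _ = (1 + 16*(d:ℝ)*δ) * ((c1/(N:ℝ))^d * Lq) := by ring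
      _ ≤ (1 + 16*(d:ℝ)*δ) * I k := mul_le_mul_of_nonneg_left hRLq hC0
  show (∫ x in cube d, g x) ≤ (1 + 16*(d:ℝ)*δ) * ∫ x in SIcc, g (x + vk k)
  rw [hLQ]
  exact hgoal
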